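/- Let f be locally absolutely continuous on (0,∞) and a > 1/2. If ∫₀^∞ |f'(r)|² r^{2a} dr < ∞, then there exists a limit f(∞) = lim_{t→∞} f(t) in ℂ, and moreover lim_{t→∞} |f(t) - f(∞)| · t^{a - 1/2} = 0. -/

import Mathlib

open MeasureTheory Set Filter Topology
open scoped ENNReal

/-- Trace lemma at infinity, case `a > 1/2`: if `f` is locally absolutely continuous on
`(0,∞)` with derivative `f'` and `∫₀^∞ |f'(r)|² r^(2a) dr < ∞`, then `f` has a limit
`L = f(∞)` at infinity and `|f(t) - L| t^(a - 1/2) → 0` as `t → ∞`. -/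
theorem stmt_1 (f f' : ℝ → ℂ) (a : ℝ) (ha : 1/2 < a)
    (hloc : ∀ s ∈ Ioi (0:ℝ), ∀ t ∈ Ioi (0:ℝ), IntervalIntegrable f' volume s t)
    (hFTC : ∀ s ∈ Ioi (0:ℝ), ∀ t ∈ Ioi (0:ℝ), f t - f s = ∫ r in s..t, f' r)
    (hint : ∫⁻ r in Ioi (0:ℝ), ENNReal.ofReal (‖f' r‖^2 * r ^ (2*a)) < ⊤) :
    ∃ L : ℂ, Tendsto f atTop (𝓝 L) ∧
      Tendsto (fun t : ℝ => ‖f t - L‖ * t ^ (a - 1/2)) atTop (𝓝 0) := by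
  set T : ℝ → ℝ≥0∞ := fun s => ∫⁻ r in Ioi s, ENNReal.ofReal (‖f' r‖^2 * r ^ (2*a)) with hTdef
  -- the key Cauchy–Schwarz estimate
  have key : ∀ s, 0 < s → ∀ t, s ≤ t →
      ENNReal.ofReal ‖f t - f s‖ ≤
        (T s) ^ (1/2:ℝ) * ENNReal.ofReal (s ^ (1-2*a) / (2*a-1)) ^ (1/2:ℝ) := by
    intro s hs t hst
    have ht : (0:ℝ) < t := hs.trans_le hst
    have hInt : IntegrableOn f' (Ioc s t) := (hloc s hs t ht).1
    have h1 : ‖f t - f s‖ ≤ ∫ r in Ioc s t, ‖f' r‖ := by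
      rw [hFTC s hs t ht, intervalIntegral.integral_of_le hst]
      exact norm_integral_le_integral_norm _
    have h2 : ENNReal.ofReal (∫ r in Ioc s t, ‖f' r‖) = ∫⁻ r in Ioc s t, ENNReal.ofReal ‖f' r‖ :=
      ofReal_integral_eq_lintegral_ofReal hInt.norm (Eventually.of_forall fun x => norm_nonneg _)
    set φ : ℝ → ℝ≥0∞ := fun r => ENNReal.ofReal (‖f' r‖ * r ^ a) with hφdef
    set ψ : ℝ → ℝ≥0∞ := fun r => ENNReal.ofReal (r ^ (-a)) with hψdef
    have hra : AEMeasurable (fun r : ℝ => r ^ a) (volume.restrict (Ioc s t)) := by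
      refine (ContinuousOn.aemeasurable ?_ measurableSet_Ioc)
      intro r hr
      exact (Real.continuousAt_rpow_const r a
        (Or.inl (ne_of_gt (hs.trans hr.1)))).continuousWithinAt
    have hrna : AEMeasurable (fun r : ℝ => r ^ (-a)) (volume.restrict (Ioc s t)) := by
      refine (ContinuousOn.aemeasurable ?_ measurableSet_Ioc)
      intro r hr
      exact (Real.continuousAt_rpow_const r (-a)
        (Or.inl (ne_of_gt (hs.trans hr.1)))).continuousWithinAt
    have hφm : AEMeasurable φ (volume.restrict (Ioc s t)) :=
      ENNReal.measurable_ofReal.comp_aemeasurable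
        (hInt.aestronglyMeasurable.norm.aemeasurable.mul hra)
    have hψm : AEMeasurable ψ (volume.restrict (Ioc s t)) :=
      ENNReal.measurable_ofReal.comp_aemeasurable hrna
    have h3 : (∫⁻ r in Ioc s t, ENNReal.ofReal ‖f' r‖) = ∫⁻ r in Ioc s t, (φ * ψ) r := by
      refine setLIntegral_congr_fun measurableSet_Ioc (fun r hr => ?_)
      have hr0 : (0:ℝ) < r := hs.trans hr.1
      have : ‖f' r‖ = (‖f' r‖ * r ^ a) * r ^ (-a) := by
        rw [mul_assoc, ← Real.rpow_add hr0, add_neg_cancel, Real.rpow_zero, mul_one]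
      rw [Pi.mul_apply, hφdef, hψdef]
      rw [← ENNReal.ofReal_mul (by positivity), ← this]
    have holder := ENNReal.lintegral_mul_le_Lp_mul_Lq (volume.restrict (Ioc s t))
      (show Real.HolderConjugate 2 2 from ⟨by norm_num, by norm_num, by norm_num⟩) hφm hψm
    have hterm1 : (∫⁻ r in Ioc s t, φ r ^ (2:ℝ)) ≤ T s := by
      have heq : (∫⁻ r in Ioc s t, φ r ^ (2:ℝ)) =
          ∫⁻ r in Ioc s t, ENNReal.ofReal (‖f' r‖^2 * r ^ (2*a)) := by
        refine setLIntegral_congr_fun measurableSet_Ioc (fun r hr => ?_)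
        have hr0 : (0:ℝ) < r := hs.trans hr.1
        rw [hφdef, ENNReal.ofReal_rpow_of_nonneg (by positivity) (by norm_num)]
        congr 1
        rw [Real.mul_rpow (norm_nonneg _) (Real.rpow_nonneg hr0.le _), ← Real.rpow_mul hr0.le,
          mul_comm a 2]
        norm_cast
      rw [heq, hTdef]
      exact lintegral_mono_set Ioc_subset_Ioi_self
    have hterm2 : (∫⁻ r in Ioc s t, ψ r ^ (2:ℝ)) ≤ ENNReal.ofReal (s ^ (1-2*a) / (2*a-1)) := by
      have heq : (∫⁻ r in Ioc s t, ψ r ^ (2:ℝ)) =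
          ∫⁻ r in Ioc s t, ENNReal.ofReal (r ^ (-(2*a))) := by
        refine setLIntegral_congr_fun measurableSet_Ioc (fun r hr => ?_)
        have hr0 : (0:ℝ) < r := hs.trans hr.1
        rw [hψdef, ENNReal.ofReal_rpow_of_nonneg (Real.rpow_nonneg hr0.le _) (by norm_num)]
        congr 1
        rw [← Real.rpow_mul hr0.le]
        ring_nf
      rw [heq]
      refine le_trans (lintegral_mono_set Ioc_subset_Ioi_self) ?_
      have hi : IntegrableOn (fun r : ℝ => r ^ (-(2*a))) (Ioi s) :=
        integrableOn_Ioi_rpow_of_lt (by linarith) hs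
      rw [← ofReal_integral_eq_lintegral_ofReal hi
        ((ae_restrict_iff' measurableSet_Ioi).2 (ae_of_all _ fun r hr =>
          (Real.rpow_pos_of_pos (hs.trans hr) _).le))]
      rw [integral_Ioi_rpow_of_lt (by linarith) hs]
      apply le_of_eq
      congr 1
      have h1' : (1 - 2*a) ≠ 0 := by linarith
      have h2' : (2*a - 1) ≠ 0 := by linarith
      rw [show -(2*a) + 1 = 1 - 2*a by ring]
      field_simp
      ring
    calc ENNReal.ofReal ‖f t - f s‖ ≤ ENNReal.ofReal (∫ r in Ioc s t, ‖f' r‖) :=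
          ENNReal.ofReal_le_ofReal h1
      _ = ∫⁻ r in Ioc s t, (φ * ψ) r := by rw [h2, h3]
      _ ≤ (∫⁻ r in Ioc s t, φ r ^ (2:ℝ)) ^ (1/(2:ℝ)) *
            (∫⁻ r in Ioc s t, ψ r ^ (2:ℝ)) ^ (1/(2:ℝ)) := holder
      _ ≤ _ := by gcongr
  -- finiteness of the tail
  have hTne : ∀ s, 0 < s → T s ≠ ⊤ := fun s hs =>
    ((lintegral_mono_set (Ioi_subset_Ioi hs.le)).trans_lt hint).ne
  -- the real-valued bound
  set B : ℝ → ℝ := fun s => Real.sqrt ((T s).toReal) * Real.sqrt (s ^ (1-2*a) / (2*a-1))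
    with hBdef
  have hBnonneg : ∀ s, 0 ≤ B s := fun s =>
    mul_nonneg (Real.sqrt_nonneg _) (Real.sqrt_nonneg _)
  have hB : ∀ s, 0 < s → ∀ t, s ≤ t → ‖f t - f s‖ ≤ B s := by
    intro s hs t hst
    have h := key s hs t hst
    have hdivnn : 0 ≤ s ^ (1-2*a) / (2*a-1) :=
      div_nonneg (Real.rpow_nonneg hs.le _) (by linarith)
    have hrw : (T s) ^ (1/2:ℝ) * ENNReal.ofReal (s ^ (1-2*a) / (2*a-1)) ^ (1/2:ℝ)
        = ENNReal.ofReal (B s) := by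
      rw [hBdef, ENNReal.ofReal_mul (Real.sqrt_nonneg _)]
      congr 1
      · rw [Real.sqrt_eq_rpow, ← ENNReal.ofReal_rpow_of_nonneg ENNReal.toReal_nonneg
          (by norm_num), ENNReal.ofReal_toReal (hTne s hs)]
      · rw [Real.sqrt_eq_rpow, ← ENNReal.ofReal_rpow_of_nonneg hdivnn (by norm_num)]
    rw [hrw] at h
    exact (ENNReal.ofReal_le_ofReal_iff (hBnonneg s)).1 h
  -- tail integral tends to zero
  have hT0 : Tendsto (fun s => (T s).toReal) atTop (𝓝 0) := by
    set ν : Measure ℝ := (volume.restrict (Ioi (0:ℝ))).withDensity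
      (fun r => ENNReal.ofReal (‖f' r‖^2 * r ^ (2*a))) with hνdef
    have hν : ∀ s : ℝ, 0 < s → ν (Ioi s) = T s := by
      intro s hs
      rw [hνdef, withDensity_apply _ measurableSet_Ioi,
        Measure.restrict_restrict measurableSet_Ioi,
        inter_eq_left.2 (Ioi_subset_Ioi hs.le)]
    have hν1 : Tendsto (fun s : ℝ => ν (Ioi s)) atTop (𝓝 0) := by
      have hempty : (⋂ s : ℝ, Ioi s) = (∅ : Set ℝ) := by
        ext x
        simp only [mem_iInter, mem_Ioi, mem_empty_iff_false, iff_false, not_forall, not_lt]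
        exact ⟨x, le_refl x⟩
      have := tendsto_measure_iInter_atTop (μ := ν) (s := fun s : ℝ => Ioi s)
        (fun i => measurableSet_Ioi.nullMeasurableSet)
        (fun i j hij => Ioi_subset_Ioi hij) ⟨1, by rw [hν 1 one_pos]; exact hTne 1 one_pos⟩
      rw [hempty] at this
      simpa [Function.comp_def] using this
    have hν2 : Tendsto T atTop (𝓝 0) := by
      refine hν1.congr' ?_
      filter_upwards [eventually_gt_atTop (0:ℝ)] with s hs
      exact hν s hs
    have := (ENNReal.tendsto_toReal (by simp)).comp hν2
    simpa [Function.comp_def] using this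
  have hsqT : Tendsto (fun s => Real.sqrt ((T s).toReal)) atTop (𝓝 0) := by
    have := (Real.continuous_sqrt.tendsto 0).comp hT0
    simpa [Function.comp_def] using this
  -- B tends to zero
  have hB0 : Tendsto B atTop (𝓝 0) := by
    rw [hBdef]
    have h2 : Tendsto (fun s : ℝ => Real.sqrt (s ^ (1-2*a) / (2*a-1))) atTop (𝓝 0) := by
      have h3 : Tendsto (fun s : ℝ => s ^ (1-2*a) / (2*a-1)) atTop (𝓝 0) := by
        have := (tendsto_rpow_neg_atTop (y := 2*a-1) (by linarith)).div_const (2*a-1)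
        simp only [zero_div] at this
        refine this.congr fun s => ?_
        congr 1
        ring_nf
      have := (Real.continuous_sqrt.tendsto 0).comp h3
      simpa [Function.comp_def] using this
    simpa using hsqT.mul h2
  -- Cauchy at infinity
  have hcauchy : CauchySeq f := by
    rw [Metric.cauchySeq_iff']
    intro ε hε
    obtain ⟨N, hN⟩ := ((hB0.eventually (gt_mem_nhds hε)).and (eventually_gt_atTop 0)).exists
    exact ⟨N, fun n hn => by
      rw [dist_eq_norm]
      exact lt_of_le_of_lt (hB N hN.2 n hn) hN.1⟩
  obtain ⟨L, hL⟩ := cauchySeq_tendsto_of_complete hcauchy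
  refine ⟨L, hL, ?_⟩
  -- the limit bound
  have hLB : ∀ s, 0 < s → ‖f s - L‖ ≤ B s := by
    intro s hs
    have h1 : Tendsto (fun t => ‖f t - f s‖) atTop (𝓝 ‖L - f s‖) :=
      ((hL.sub_const (f s)).norm)
    have h2 : ∀ᶠ t in atTop, ‖f t - f s‖ ≤ B s := by
      filter_upwards [eventually_ge_atTop s] with t hts
      exact hB s hs t hts
    have := le_of_tendsto h1 h2
    rwa [norm_sub_rev] at this
  -- final squeeze
  have hg : Tendsto (fun t : ℝ => Real.sqrt ((T t).toReal) * (1 / Real.sqrt (2*a-1)))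
      atTop (𝓝 0) := by
    simpa using hsqT.mul_const (1 / Real.sqrt (2*a-1))
  refine squeeze_zero' ?_ ?_ hg
  · filter_upwards [eventually_gt_atTop (0:ℝ)] with t ht
    positivity
  · filter_upwards [eventually_gt_atTop (0:ℝ)] with t ht
    have hone : Real.sqrt (t ^ (1-2*a)) * t ^ (a - 1/2) = 1 := by
      rw [Real.sqrt_eq_rpow, ← Real.rpow_mul ht.le, ← Real.rpow_add ht,
        show (1 - 2*a) * (1/2) + (a - 1/2) = 0 by ring, Real.rpow_zero]
    calc ‖f t - L‖ * t ^ (a - 1/2) ≤ B t * t ^ (a - 1/2) := by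
          apply mul_le_mul_of_nonneg_right (hLB t ht) (Real.rpow_nonneg ht.le _)
      _ = Real.sqrt ((T t).toReal) * (1 / Real.sqrt (2*a-1)) := by
          have hsd : Real.sqrt (t ^ (1-2*a) / (2*a-1)) * t ^ (a - 1/2)
              = 1 / Real.sqrt (2*a-1) := by
            rw [Real.sqrt_div (Real.rpow_nonneg ht.le _), div_mul_eq_mul_div, hone, one_div]
          show Real.sqrt ((T t).toReal) * Real.sqrt (t ^ (1-2*a) / (2*a-1)) * t ^ (a - 1/2) = _
          rw [mul_assoc, hsd]
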